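/- Let N be odd, κ(j) := N+1−j, and let σ ∈ S_N satisfy κσκ = σ. Define Morse numbers i : {1,…,N} → ℤ by i_1 = 0 and i_{j+1} = i_j + (−1)^{j+1} sign(σ(j+1) − σ(j)), and for each integer m let c_m := #{j : i_j = m}. Then there is exactly one m with c_m odd, namely m_* := i_{(N+1)/2}; all other counts c_m are even. Moreover m_* is even if and only if N ≡ 1 (mod 4), and m_* is odd if and only if N ≡ 3 (mod 4). -/

import Mathlib

lemma even_card_invol (f : ℕ → ℕ) :
    ∀ s : Finset ℕ, (∀ a ∈ s, f a ∈ s) → (∀ a ∈ s, f (f a) = a) →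
      (∀ a ∈ s, f a ≠ a) → Even s.card := by
  intro s
  induction s using Finset.strongInduction with
  | _ s ih =>
    intro hmem hinv hne
    rcases s.eq_empty_or_nonempty with rfl | ⟨a, ha⟩
    · simp
    · set t := s \ {a, f a} with ht
      have hfa : f a ∈ s := hmem a ha
      have hpair : ({a, f a} : Finset ℕ) ⊆ s := by
        intro x hx; simp at hx; rcases hx with rfl | rfl <;> assumption
      have hcardpair : ({a, f a} : Finset ℕ).card = 2 := by
        rw [Finset.card_insert_of_notMem (by simp [Ne.symm (hne a ha)]), Finset.card_singleton]
      have hts : t ⊂ s := by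
        refine Finset.ssubset_iff_of_subset (Finset.sdiff_subset) |>.mpr ⟨a, ha, by simp [ht]⟩
      have htmem : ∀ b ∈ t, f b ∈ t := by
        intro b hb
        simp only [ht, Finset.mem_sdiff, Finset.mem_insert, Finset.mem_singleton] at hb ⊢
        obtain ⟨hbs, hb2⟩ := hb
        push_neg at hb2 ⊢
        refine ⟨hmem b hbs, ?_, ?_⟩
        · intro h; exact hb2.2 (by rw [← hinv b hbs, h])
        · intro h
          exact hb2.1 (by rw [← hinv b hbs, h, hinv a ha])
      have : Even t.card := ih t hts htmem
        (fun b hb => hinv b (Finset.mem_sdiff.mp hb).1)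
        (fun b hb => hne b (Finset.mem_sdiff.mp hb).1)
      have hle : 2 ≤ s.card := hcardpair ▸ Finset.card_le_card hpair
      have hsd : t.card = s.card - 2 := by rw [ht, Finset.card_sdiff_of_subset hpair, hcardpair]
      have hcard : s.card = t.card + 2 := by omega
      rw [hcard]
      exact this.add even_two

/-- Proposition 3.1: for a flip-symmetric Sturm permutation, all Morse-index
    counts c_m are even except for the unique odd count at m_* = i_{(N+1)/2},
    whose parity is determined by N mod 4. -/
theorem flip_symmetric_cell_counts (N : ℕ) (hN : Odd N) (σ : ℕ → ℕ)
    (hbij : Set.BijOn σ (Set.Icc 1 N) (Set.Icc 1 N))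
    (hsym : ∀ j ∈ Set.Icc 1 N, σ (N + 1 - j) = N + 1 - σ j)
    (i : ℕ → ℤ) (h1 : i 1 = 0)
    (hrec : ∀ j, 1 ≤ j → j < N →
      i (j + 1) = i j + (-1 : ℤ) ^ (j + 1) * Int.sign ((σ (j + 1) : ℤ) - (σ j : ℤ))) :
    (∀ m : ℤ,
      Odd (((Finset.Icc 1 N).filter (fun j => i j = m)).card) ↔ m = i ((N + 1) / 2)) ∧
    (Even (i ((N + 1) / 2)) ↔ N % 4 = 1) ∧
    (Odd (i ((N + 1) / 2)) ↔ N % 4 = 3) := by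
  obtain ⟨K, hK⟩ := hN
  set n := (N + 1) / 2 with hn
  have hn2 : 2 * n = N + 1 := by omega
  have h1n : 1 ≤ n := by omega
  have hnN : n ≤ N := by omega
  have hmemσ : ∀ j, 1 ≤ j → j ≤ N → 1 ≤ σ j ∧ σ j ≤ N := by
    intro j hj1 hj2
    exact hbij.mapsTo ⟨hj1, hj2⟩
  have hσne : ∀ j, 1 ≤ j → j < N → (σ (j + 1) : ℤ) ≠ (σ j : ℤ) := by
    intro j hj1 hj2 h
    have h' : σ (j + 1) = σ j := by exact_mod_cast h
    have := hbij.injOn ⟨by omega, by omega⟩ ⟨hj1, le_of_lt hj2⟩ h'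
    omega
  -- each step is ±1
  have hstep : ∀ j, 1 ≤ j → j < N →
      (-1 : ℤ) ^ (j + 1) * Int.sign ((σ (j + 1) : ℤ) - (σ j : ℤ)) = 1 ∨
      (-1 : ℤ) ^ (j + 1) * Int.sign ((σ (j + 1) : ℤ) - (σ j : ℤ)) = -1 := by
    intro j hj1 hj2
    have hne := hσne j hj1 hj2
    have hs : Int.sign ((σ (j + 1) : ℤ) - (σ j : ℤ)) = 1 ∨
        Int.sign ((σ (j + 1) : ℤ) - (σ j : ℤ)) = -1 := by
      rcases lt_trichotomy ((σ (j + 1) : ℤ) - (σ j : ℤ)) 0 with h | h | h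
      · right; exact Int.sign_eq_neg_one_iff_neg.mpr h
      · exact absurd (by linarith : (σ (j + 1) : ℤ) = σ j) hne
      · left; exact Int.sign_eq_one_iff_pos.mpr h
    have hp : (-1 : ℤ) ^ (j + 1) = 1 ∨ (-1 : ℤ) ^ (j + 1) = -1 := neg_one_pow_eq_or ℤ (j + 1)
    rcases hs with hs | hs <;> rcases hp with hp | hp <;> rw [hs, hp] <;> norm_num
  -- parity of Morse numbers
  have hpar : ∀ j, 1 ≤ j → j ≤ N → Odd (i j + j) := by
    intro j
    induction j with
    | zero => omega
    | succ j ih =>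
      intro _ h2
      rcases Nat.eq_zero_or_pos j with rfl | hj1
      · simpa [h1] using (⟨0, by ring⟩ : Odd (1 : ℤ))
      · have hrecj := hrec j hj1 (by omega)
        have hih := ih hj1 (by omega)
        have heq : i (j + 1) + ((j : ℤ) + 1) =
            (i j + j) + ((-1 : ℤ) ^ (j + 1) * Int.sign ((σ (j + 1) : ℤ) - (σ j : ℤ)) + 1) := by
          rw [hrecj]; ring
        have heven : Even ((-1 : ℤ) ^ (j + 1) * Int.sign ((σ (j + 1) : ℤ) - (σ j : ℤ)) + 1) := by
          rcases hstep j hj1 (by omega) with h | h <;> rw [h] <;> norm_num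
        have := hih.add_even heven
        rw [← heq] at this
        simpa using this
  -- symmetry of Morse numbers
  have key : ∀ k, k < n → i (N + 1 - (n - k)) = i (n - k) := by
    intro k
    induction k with
    | zero =>
      intro _
      have : N + 1 - (n - 0) = n - 0 := by omega
      rw [this]
    | succ k ihk =>
      intro hk
      have ih := ihk (by omega)
      set j := n - (k + 1) with hj
      have hj1 : 1 ≤ j := by omega
      have hjn : j + 1 = n - k := by omega
      have hjN : j < N := by omega
      have hNj1 : 1 ≤ N - j := by omega
      have hNjN : N - j < N := by omega
      -- rewrite the IH index
      have ihix : N + 1 - (j + 1) = N - j := by omega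
      rw [← hjn, ihix] at ih
      -- sign equality
      have hσj := hmemσ j hj1 (by omega)
      have hσj1 := hmemσ (j + 1) (by omega) (by omega)
      have e1 : (σ (N + 1 - j) : ℤ) = (N : ℤ) + 1 - σ j := by
        rw [hsym j ⟨hj1, by omega⟩]; omega
      have e2 : (σ (N + 1 - (j + 1)) : ℤ) = (N : ℤ) + 1 - σ (j + 1) := by
        rw [hsym (j + 1) ⟨by omega, by omega⟩]; omega
      have ix1 : N - j + 1 = N + 1 - j := by omega
      have ix2 : N - j = N + 1 - (j + 1) := by omega
      have hsignarg : (σ (N - j + 1) : ℤ) - (σ (N - j) : ℤ) = (σ (j + 1) : ℤ) - (σ j : ℤ) := by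
        rw [ix1, ix2, e1, e2]; ring
      -- power flip
      have hpow : (-1 : ℤ) ^ (N - j + 1) = -(-1 : ℤ) ^ (j + 1) := by
        have hsum : (N - j + 1) + (j + 1) = N + 2 := by omega
        have hoddN2 : Odd (N + 2) := ⟨K + 1, by omega⟩
        have hmul : (-1 : ℤ) ^ (N - j + 1) * (-1 : ℤ) ^ (j + 1) = -1 := by
          rw [← pow_add, hsum, hoddN2.neg_one_pow]
        rcases neg_one_pow_eq_or ℤ (j + 1) with h | h <;> rw [h] at hmul ⊢ <;> linarith
      have hrecN := hrec (N - j) hNj1 hNjN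
      have hrecj := hrec j hj1 hjN
      have goalix : N + 1 - j = N - j + 1 := by omega
      rw [goalix, hrecN, hsignarg, hpow, ih, hrecj]
      ring
  have symA : ∀ j, 1 ≤ j → j ≤ N → i (N + 1 - j) = i j := by
    intro j hj1 hj2
    rcases le_or_gt j n with h | h
    · have hk := key (n - j) (by omega)
      have hidx : n - (n - j) = j := by omega
      rwa [hidx] at hk
    · have hk := key (n - (N + 1 - j)) (by omega)
      have hidx : n - (n - (N + 1 - j)) = N + 1 - j := by omega
      rw [hidx] at hk
      have h2 : N + 1 - (N + 1 - j) = j := by omega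
      rw [h2] at hk
      exact hk.symm
  -- counting
  have hcount : ∀ m : ℤ,
      Odd (((Finset.Icc 1 N).filter (fun j => i j = m)).card) ↔ m = i n := by
    intro m
    set s := (Finset.Icc 1 N).filter (fun j => i j = m) with hs
    have hsmem : ∀ j, j ∈ s ↔ (1 ≤ j ∧ j ≤ N ∧ i j = m) := by
      intro j; simp [hs, Finset.mem_filter, Finset.mem_Icc, and_assoc]
    have hρmem : ∀ j ∈ s, N + 1 - j ∈ s := by
      intro j hj
      obtain ⟨h1', h2', h3'⟩ := (hsmem j).mp hj
      exact (hsmem _).mpr ⟨by omega, by omega, by rw [symA j h1' h2']; exact h3'⟩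
    have hρinv : ∀ j ∈ s, N + 1 - (N + 1 - j) = j := by
      intro j hj
      obtain ⟨h1', h2', _⟩ := (hsmem j).mp hj
      omega
    by_cases hm : m = i n
    · constructor
      · intro _; exact hm
      · intro _
        have hns : n ∈ s := (hsmem n).mpr ⟨h1n, hnN, hm.symm⟩
        set t := s.erase n with htdef
        have htev : Even t.card := by
          apply even_card_invol (fun j => N + 1 - j)
          · intro a ha
            obtain ⟨hane, has⟩ := Finset.mem_erase.mp ha
            obtain ⟨h1', h2', _⟩ := (hsmem a).mp has
            refine Finset.mem_erase.mpr ⟨?_, hρmem a has⟩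
            omega
          · intro a ha; exact hρinv a (Finset.mem_erase.mp ha).2
          · intro a ha
            obtain ⟨hane, has⟩ := Finset.mem_erase.mp ha
            obtain ⟨h1', h2', _⟩ := (hsmem a).mp has
            omega
        have hc : s.card = t.card + 1 := by
          rw [htdef, Finset.card_erase_of_mem hns]
          have : 1 ≤ s.card := Finset.card_pos.mpr ⟨n, hns⟩
          omega
        rw [hc]
        exact htev.add_one
    · constructor
      · intro hodd
        exfalso
        have hev : Even s.card := by
          apply even_card_invol (fun j => N + 1 - j) s hρmem hρinv
          intro a ha h
          obtain ⟨h1', h2', h3'⟩ := (hsmem a).mp ha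
          have : a = n := by omega
          exact hm (by rw [← this, h3'])
        exact (Nat.not_odd_iff_even.mpr hev) hodd
      · intro h; exact absurd h hm
  refine ⟨hcount, ?_, ?_⟩
  · have hio : Odd (i n) ↔ Even ((n : ℤ)) := Int.odd_add.mp (hpar n h1n hnN)
    rw [← Int.not_odd_iff_even, hio, Int.even_coe_nat, Nat.even_iff]
    omega
  · have hio : Odd (i n) ↔ Even ((n : ℤ)) := Int.odd_add.mp (hpar n h1n hnN)
    rw [hio, Int.even_coe_nat, Nat.even_iff]
    omega
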